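/- Let φ be a frame for H, ψ its canonical dual frame, and m ∈ ℓ^∞ a sequence of real numbers. Then the spectrum of M_{m,φ,ψ} is real, and is contained in the interval [inf_n m_n, sup_n m_n]. If moreover all m_n are nonnegative, the spectrum is contained in [0, sup_n m_n]. -/

import Mathlib

open scoped InnerProductSpace

set_option maxHeartbeats 2000000

/-- for a real bounded symbol, the spectrum of the multiplier of a frame and
its canonical dual is real and contained in `[inf m, sup m]`; if moreover `m ≥ 0` the
spectrum is contained in `[0, sup m]`. -/
theorem spectrum_multiplier_canonical_dual_real
    {H : Type*} [NormedAddCommGroup H] [InnerProductSpace ℂ H] [CompleteSpace H]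
    (φ : ℕ → H) (A B : ℝ) (hA : 0 < A) (hB : 0 < B)
    (hframe : ∀ f : H, ∃ s : ℝ, HasSum (fun n => ‖⟪φ n, f⟫_ℂ‖ ^ 2) s ∧
      A * ‖f‖ ^ 2 ≤ s ∧ s ≤ B * ‖f‖ ^ 2)
    (S : H →L[ℂ] H) (hS : ∀ f : H, HasSum (fun n => ⟪φ n, f⟫_ℂ • φ n) (S f))
    (Sinv : H →L[ℂ] H) (hSinv : ∀ x : H, Sinv (S x) = x ∧ S (Sinv x) = x)
    (ψ : ℕ → H) (hψ : ∀ n, ψ n = Sinv (φ n))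
    (m : ℕ → ℝ) (hm : ∃ C : ℝ, ∀ n, |m n| ≤ C)
    (M : H →L[ℂ] H)
    (hM : ∀ f : H, HasSum (fun n => ((m n : ℂ) * ⟪ψ n, f⟫_ℂ) • φ n) (M f)) :
    (∀ z ∈ spectrum ℂ M, z.im = 0 ∧ (⨅ n, m n) ≤ z.re ∧ z.re ≤ (⨆ n, m n)) ∧
    ((∀ n, 0 ≤ m n) → ∀ z ∈ spectrum ℂ M, z.im = 0 ∧ 0 ≤ z.re ∧ z.re ≤ (⨆ n, m n)) := by
  obtain ⟨C, hC⟩ := hm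
  have hbb : BddBelow (Set.range m) := ⟨-C, by rintro x ⟨n, rfl⟩; linarith [(abs_le.mp (hC n)).1]⟩
  have hba : BddAbove (Set.range m) := ⟨C, by rintro x ⟨n, rfl⟩; exact (abs_le.mp (hC n)).2⟩
  set a := ⨅ n, m n with ha
  set b := ⨆ n, m n with hb
  have ham : ∀ n, a ≤ m n := fun n => ciInf_le hbb n
  have hmb : ∀ n, m n ≤ b := fun n => le_ciSup hba n
  -- inner products with the sums defining S
  have hsumS : ∀ y x : H, HasSum (fun n => ⟪φ n, x⟫_ℂ * ⟪y, φ n⟫_ℂ) ⟪y, S x⟫_ℂ := by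
    intro y x
    have := (hS x).mapL (innerSL ℂ y)
    simpa [inner_smul_right] using this
  have hterm : ∀ (y : H) (n : ℕ),
      ⟪φ n, y⟫_ℂ * ⟪y, φ n⟫_ℂ = ((‖⟪φ n, y⟫_ℂ‖ ^ 2 : ℝ) : ℂ) := by
    intro y n
    rw [show ⟪y, φ n⟫_ℂ = (starRingEnd ℂ) ⟪φ n, y⟫_ℂ from (inner_conj_symm _ _).symm,
      RCLike.mul_conj]
    norm_cast
  -- S is symmetric
  have hSsym : ∀ x y : H, ⟪S x, y⟫_ℂ = ⟪x, S y⟫_ℂ := by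
    intro x y
    have h1 : HasSum (fun n => (starRingEnd ℂ) (⟪φ n, x⟫_ℂ * ⟪y, φ n⟫_ℂ))
        ((starRingEnd ℂ) ⟪y, S x⟫_ℂ) :=
      (hsumS y x).mapL (Complex.conjCLE.toContinuousLinearMap)
    have h1' : HasSum (fun n => ⟪φ n, y⟫_ℂ * ⟪x, φ n⟫_ℂ) ((starRingEnd ℂ) ⟪y, S x⟫_ℂ) := by
      refine HasSum.congr_fun h1 fun n => ?_
      simp only [map_mul, inner_conj_symm]
      ring
    have h2 := h1'.unique (hsumS x y)
    rw [← inner_conj_symm (S x) y]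
    exact h2
  have hSinvsym : ∀ x y : H, ⟪Sinv x, y⟫_ℂ = ⟪x, Sinv y⟫_ℂ := by
    intro x y
    conv_lhs => rw [← (hSinv y).2]
    rw [← hSsym, (hSinv x).2]
  -- the real quadratic form of S
  have hkey : ∀ y : H, HasSum (fun n => ‖⟪φ n, y⟫_ℂ‖ ^ 2) (⟪y, S y⟫_ℂ).re ∧
      (⟪y, S y⟫_ℂ) = ((⟪y, S y⟫_ℂ).re : ℂ) ∧
      A * ‖y‖ ^ 2 ≤ (⟪y, S y⟫_ℂ).re ∧ (⟪y, S y⟫_ℂ).re ≤ B * ‖y‖ ^ 2 := by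
    intro y
    obtain ⟨s, hs, hls, hus⟩ := hframe y
    have h1 : HasSum (fun n => ((‖⟪φ n, y⟫_ℂ‖ ^ 2 : ℝ) : ℂ)) ((s : ℝ) : ℂ) :=
      hs.mapL Complex.ofRealCLM
    have h2 : HasSum (fun n => ((‖⟪φ n, y⟫_ℂ‖ ^ 2 : ℝ) : ℂ)) ⟪y, S y⟫_ℂ :=
      HasSum.congr_fun (hsumS y y) (fun n => (hterm y n).symm)
    have hys : ⟪y, S y⟫_ℂ = ((s : ℝ) : ℂ) := h2.unique h1
    have hre : (⟪y, S y⟫_ℂ).re = s := by rw [hys]; simp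
    refine ⟨hre ▸ hs, by rw [hys]; simp, hre ▸ hls, hre ▸ hus⟩
  -- algebraic identities
  have hSS1 : (S * Sinv : H →L[ℂ] H) = 1 := by
    ext x; simpa [ContinuousLinearMap.mul_apply] using (hSinv x).2
  have hSS2 : (Sinv * S : H →L[ℂ] H) = 1 := by
    ext x; simpa [ContinuousLinearMap.mul_apply] using (hSinv x).1
  -- Sinv is positive
  have hSinvpos : (Sinv : H →L[ℂ] H).IsPositive := by
    refine ⟨fun x y => hSinvsym x y, ?_⟩
    intro x
    have hx : ⟪Sinv x, x⟫_ℂ = ⟪Sinv x, S (Sinv x)⟫_ℂ := by rw [(hSinv x).2]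
    obtain ⟨_, _, hl, _⟩ := hkey (Sinv x)
    rw [ContinuousLinearMap.reApplyInnerSelf_apply, hx, RCLike.re_to_complex]
    exact le_trans (by positivity) hl
  have hSinv0 : (0 : H →L[ℂ] H) ≤ Sinv := (ContinuousLinearMap.nonneg_iff_isPositive _).mpr hSinvpos
  set R : H →L[ℂ] H := CFC.sqrt Sinv with hRdef
  have hR0 : (0 : H →L[ℂ] H) ≤ R := CFC.sqrt_nonneg _
  have hRR : R * R = Sinv := CFC.sqrt_mul_sqrt_self Sinv hSinv0
  have hRsa : IsSelfAdjoint R := IsSelfAdjoint.of_nonneg hR0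
  have hRsym : ∀ x y : H, ⟪R x, y⟫_ℂ = ⟪x, R y⟫_ℂ := fun x y =>
    (ContinuousLinearMap.isSelfAdjoint_iff_isSymmetric.mp hRsa) x y
  have hc : Sinv * R = R * Sinv := by rw [← hRR, mul_assoc]
  have hRS : R * S = S * R := by
    calc R * S = S * Sinv * (R * S) := by rw [hSS1, one_mul]
    _ = S * (Sinv * R) * S := by simp only [mul_assoc]
    _ = S * (R * Sinv) * S := by rw [hc]
    _ = S * R * (Sinv * S) := by simp only [mul_assoc]
    _ = S * R := by rw [hSS2, mul_one]
  have hRSR : R * S * R = 1 := by rw [hRS, mul_assoc, hRR, hSS1]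
  have hRu1 : R * (S * R) = 1 := by rw [← mul_assoc, hRSR]
  have hRu2 : (S * R) * R = 1 := by rw [mul_assoc, hRR, hSS1]
  set uR : (H →L[ℂ] H)ˣ := ⟨R, S * R, hRu1, hRu2⟩ with huR
  -- T = M * S
  have hT : ∀ f : H, HasSum (fun n => ((m n : ℂ) * ⟪φ n, f⟫_ℂ) • φ n) ((M * S) f) := by
    intro f
    have := hM (S f)
    rw [show M (S f) = (M * S) f from rfl] at this
    refine HasSum.congr_fun this fun n => ?_
    rw [hψ n, hSinvsym, (hSinv f).1]
  have hsumT : ∀ y f : H,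
      HasSum (fun n => (m n : ℂ) * (⟪φ n, f⟫_ℂ * ⟪y, φ n⟫_ℂ)) ⟪y, (M * S) f⟫_ℂ := by
    intro y f
    have := (hT f).mapL (innerSL ℂ y)
    simpa [inner_smul_right, mul_assoc] using this
  have hTsym : ∀ x y : H, ⟪(M * S) x, y⟫_ℂ = ⟪x, (M * S) y⟫_ℂ := by
    intro x y
    have h1 : HasSum (fun n => (starRingEnd ℂ) ((m n : ℂ) * (⟪φ n, x⟫_ℂ * ⟪y, φ n⟫_ℂ)))
        ((starRingEnd ℂ) ⟪y, (M * S) x⟫_ℂ) :=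
      (hsumT y x).mapL (Complex.conjCLE.toContinuousLinearMap)
    have h1' : HasSum (fun n => (m n : ℂ) * (⟪φ n, y⟫_ℂ * ⟪x, φ n⟫_ℂ))
        ((starRingEnd ℂ) ⟪y, (M * S) x⟫_ℂ) := by
      refine HasSum.congr_fun h1 fun n => ?_
      simp only [map_mul, inner_conj_symm, Complex.conj_ofReal]
      ring
    have h2 := h1'.unique (hsumT x y)
    rw [← inner_conj_symm ((M * S) x) y]
    exact h2
  set N : H →L[ℂ] H := R * (M * S) * R with hNdef
  -- spectrum of M equals spectrum of N
  have hM' : M = (M * S) * Sinv := by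
    ext f
    simp only [ContinuousLinearMap.mul_apply]
    rw [(hSinv f).2]
  have hconj : (uR : H →L[ℂ] H) * M * ↑uR⁻¹ = N := by
    show R * M * (S * R) = N
    rw [hM', hNdef]
    simp only [mul_assoc]
    congr 2
    rw [← mul_assoc Sinv S R, hSS2, one_mul]
  have hspec : spectrum ℂ M = spectrum ℂ N := by
    rw [← hconj, spectrum.units_conjugate]
  -- N is selfadjoint
  have hNsym : ∀ x y : H, ⟪N x, y⟫_ℂ = ⟪x, N y⟫_ℂ := by
    intro x y
    show ⟪R ((M * S) (R x)), y⟫_ℂ = ⟪x, R ((M * S) (R y))⟫_ℂ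
    rw [hRsym, hTsym, ← hRsym]
  have hNsa : IsSelfAdjoint N :=
    ContinuousLinearMap.isSelfAdjoint_iff_isSymmetric.mpr fun x y => hNsym x y
  -- quadratic form bounds for N
  have hform : ∀ f : H, (⟪f, N f⟫_ℂ).im = 0 ∧
      a * ‖f‖ ^ 2 ≤ (⟪f, N f⟫_ℂ).re ∧ (⟪f, N f⟫_ℂ).re ≤ b * ‖f‖ ^ 2 := by
    intro f
    set g := R f with hg
    have hNg : ⟪f, N f⟫_ℂ = ⟪g, (M * S) g⟫_ℂ := by
      show ⟪f, R ((M * S) (R f))⟫_ℂ = _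
      rw [← hRsym]
    obtain ⟨hcsum, _, _, _⟩ := hkey g
    have h1 : R (S (R f)) = f := by
      have h := DFunLike.congr_fun hRSR f
      simpa [ContinuousLinearMap.mul_apply] using h
    have hgf : (⟪g, S g⟫_ℂ).re = ‖f‖ ^ 2 := by
      have hx : ⟪g, S g⟫_ℂ = ⟪f, f⟫_ℂ := by
        calc ⟪R f, S (R f)⟫_ℂ = ⟪f, R (S (R f))⟫_ℂ := by rw [hRsym]
        _ = ⟪f, f⟫_ℂ := by rw [h1]
      rw [hx, inner_self_eq_norm_sq_to_K]
      norm_cast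
    have h2 : HasSum (fun n => ((m n * ‖⟪φ n, g⟫_ℂ‖ ^ 2 : ℝ) : ℂ)) ⟪g, (M * S) g⟫_ℂ := by
      refine HasSum.congr_fun (hsumT g g) fun n => ?_
      rw [Complex.ofReal_mul, ← hterm g n]
    have him : (⟪g, (M * S) g⟫_ℂ).im = 0 := by
      have h3 := h2.mapL Complex.imCLM
      simp only [Complex.imCLM_apply, Complex.ofReal_im] at h3
      exact h3.unique hasSum_zero
    have hre : HasSum (fun n => m n * ‖⟪φ n, g⟫_ℂ‖ ^ 2) (⟪g, (M * S) g⟫_ℂ).re := by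
      have h3 := h2.mapL Complex.reCLM
      simp only [Complex.reCLM_apply, Complex.ofReal_re] at h3
      exact h3
    have hcsum' : HasSum (fun n => ‖⟪φ n, g⟫_ℂ‖ ^ 2) (‖f‖ ^ 2) := hgf ▸ hcsum
    refine ⟨by rw [hNg]; exact him, ?_, ?_⟩
    · rw [hNg]
      refine hasSum_le (fun n => ?_) (hcsum'.mul_left a) hre
      exact mul_le_mul_of_nonneg_right (ham n) (by positivity)
    · rw [hNg]
      refine hasSum_le (fun n => ?_) hre (hcsum'.mul_left b)
      exact mul_le_mul_of_nonneg_right (hmb n) (by positivity)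
  have hreNx : ∀ x : H, (⟪N x, x⟫_ℂ).re = (⟪x, N x⟫_ℂ).re := by
    intro x
    rw [← inner_conj_symm x (N x), Complex.conj_re]
  -- order bounds
  have hPa : 0 ≤ N - algebraMap ℝ (H →L[ℂ] H) a := by
    rw [ContinuousLinearMap.nonneg_iff_isPositive]
    have hsub : ∀ x : H, (N - algebraMap ℝ (H →L[ℂ] H) a) x = N x - (a : ℂ) • x := by
      intro x
      rw [IsScalarTower.algebraMap_apply ℝ ℂ (H →L[ℂ] H), Algebra.algebraMap_eq_smul_one]
      simp [ContinuousLinearMap.sub_apply]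
    refine ⟨fun x y => ?_, fun x => ?_⟩
    · simp only [ContinuousLinearMap.coe_coe, hsub, inner_sub_left, inner_sub_right,
        inner_smul_left, inner_smul_right, Complex.conj_ofReal, hNsym]
    · rw [ContinuousLinearMap.reApplyInnerSelf_apply, hsub x, inner_sub_left, inner_smul_left,
        Complex.conj_ofReal]
      obtain ⟨_, hl, _⟩ := hform x
      have hxx : (⟪x, x⟫_ℂ) = ((‖x‖ ^ 2 : ℝ) : ℂ) := by
        rw [inner_self_eq_norm_sq_to_K]; norm_cast
      rw [hxx]
      simp only [RCLike.re_to_complex, Complex.sub_re, Complex.mul_re, Complex.ofReal_re,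
        Complex.ofReal_im]
      have := hreNx x
      nlinarith [this, hl]
  have hPb : 0 ≤ algebraMap ℝ (H →L[ℂ] H) b - N := by
    rw [ContinuousLinearMap.nonneg_iff_isPositive]
    have hsub : ∀ x : H, (algebraMap ℝ (H →L[ℂ] H) b - N) x = (b : ℂ) • x - N x := by
      intro x
      rw [IsScalarTower.algebraMap_apply ℝ ℂ (H →L[ℂ] H), Algebra.algebraMap_eq_smul_one]
      simp [ContinuousLinearMap.sub_apply]
    refine ⟨fun x y => ?_, fun x => ?_⟩
    · simp only [ContinuousLinearMap.coe_coe, hsub, inner_sub_left, inner_sub_right,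
        inner_smul_left, inner_smul_right, Complex.conj_ofReal, hNsym]
    · rw [ContinuousLinearMap.reApplyInnerSelf_apply, hsub x, inner_sub_left, inner_smul_left,
        Complex.conj_ofReal]
      obtain ⟨_, _, hu⟩ := hform x
      have hxx : (⟪x, x⟫_ℂ) = ((‖x‖ ^ 2 : ℝ) : ℂ) := by
        rw [inner_self_eq_norm_sq_to_K]; norm_cast
      rw [hxx]
      simp only [RCLike.re_to_complex, Complex.sub_re, Complex.mul_re, Complex.ofReal_re,
        Complex.ofReal_im]
      have := hreNx x
      nlinarith [this, hu]
  -- main statement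
  have main : ∀ z ∈ spectrum ℂ M, z.im = 0 ∧ a ≤ z.re ∧ z.re ≤ b := by
    intro z hz
    rw [hspec] at hz
    have hzre : z = (z.re : ℂ) := hNsa.mem_spectrum_eq_re hz
    have hz' : ((z.re : ℝ) : ℂ) ∈ spectrum ℂ N := by rwa [← hzre]
    have hzr : z.re ∈ spectrum ℝ N := by
      refine spectrum.of_algebraMap_mem ℂ ?_
      simpa using hz'
    refine ⟨by rw [hzre]; simp, ?_, ?_⟩
    · have hmem : z.re - a ∈ spectrum ℝ (N - algebraMap ℝ (H →L[ℂ] H) a) := by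
        rw [← spectrum.sub_singleton_eq]
        exact Set.sub_mem_sub hzr rfl
      have := spectrum_nonneg_of_nonneg hPa hmem
      linarith
    · have hmem : b - z.re ∈ spectrum ℝ (algebraMap ℝ (H →L[ℂ] H) b - N) := by
        rw [← spectrum.singleton_sub_eq]
        exact Set.sub_mem_sub rfl hzr
      have := spectrum_nonneg_of_nonneg hPb hmem
      linarith
  refine ⟨main, fun hpos z hz => ?_⟩
  obtain ⟨him, hla, hub⟩ := main z hz
  have h0a : 0 ≤ a := le_ciInf fun n => hpos n
  exact ⟨him, le_trans h0a hla, hub⟩
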